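/- Fix n ≥ 3. Let G be the symmetric group on {1, …, n−1} and let H ≤ G be the stabilizer of the point n−1 (a copy of the symmetric group on {1, …, n−2}). Let (ψ^ν)_{ν ∈ I} be a finite family of pairwise inequivalent irreducible unitary matrix representations of G, with ψ^ν : G → U(m_ν) (irreducible: every m_ν × m_ν complex matrix commuting with ψ^ν(σ) for all σ ∈ G is a scalar multiple of the identity; pairwise inequivalent: for μ ≠ ν, the only matrix T with T·ψ^μ(σ) = ψ^ν(σ)·T for all σ ∈ G is T = 0). Let φ : H → U(w) be a unitary matrix representation of H, extended to φ̂ : G → M_w(ℂ) by φ̂(σ) = φ(σ) if σ ∈ H and φ̂(σ) = 0 otherwise. Fix q ∈ {1, …, n−1} and r ∈ {1, …, w}. For ν ∈ I and j ∈ {1, …, m_ν}, set N^ν_j = (m_ν/(n−1)!)·Σ_{σ ∈ G} (ψ^ν(σ⁻¹))_{jj} · [σ(q) = q] · (φ̂((q, n−1)·σ·(q, n−1)))_{rr}, where (q, n−1) denotes the transposition of q and n−1 (the identity if q = n−1), and assume each N^ν_j is a strictly positive real number. Define, for a ∈ {1, …, n−1}, k ∈ {1, …, w}, z^{aν}_{kj}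 = (m_ν/(√(N^ν_j)·(n−1)!))·Σ_{σ ∈ G} (ψ^ν(σ⁻¹))_{jj} · [a = σ(q)] · (φ̂((a, n−1)·σ·(q, n−1)))_{kr}. Then the columns of z, indexed by pairs (ν, j), are orthonormal: for all μ, ν ∈ I, j' ∈ {1, …, m_μ}, j ∈ {1, …, m_ν}, Σ_{a=1}^{n−1} Σ_{k=1}^{w} conj(z^{aμ}_{kj'}) · z^{aν}_{kj} = 1 if (μ, j') = (ν, j) and 0 otherwise. In particular, if all the representations ψ^ν and φ are real orthogonal, then z is real and its columns are orthonormal with respect to the real inner product. -/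

import Mathlib

open Matrix
open scoped BigOperators

/-- The normalization constant
`N^ν_j = (m_ν/(n−1)!)·Σ_{σ ∈ S(n−1)} ψ^ν(σ⁻¹)_{jj}·[σ(q)=q]·φ̂((q,n−1)σ(q,n−1))_{rr}`. -/
noncomputable def Nval {n w : ℕ} {I : Type} {mdim : I → ℕ}
    (ψ : (ν : I) → Equiv.Perm (Fin (n - 1)) → Matrix (Fin (mdim ν)) (Fin (mdim ν)) ℂ)
    (φhat : Equiv.Perm (Fin (n - 1)) → Matrix (Fin w) (Fin w) ℂ)
    (q pLast : Fin (n - 1)) (r : Fin w) (ν : I) (j : Fin (mdim ν)) : ℂ :=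
  ((mdim ν : ℂ) / (Nat.factorial (n - 1) : ℂ)) *
    ∑ σ : Equiv.Perm (Fin (n - 1)),
      (ψ ν σ⁻¹) j j * (if σ q = q then 1 else 0) *
        (φhat (Equiv.swap q pLast * σ * Equiv.swap q pLast)) r r

/-- The matrix entries
`z^{aν}_{kj} = (m_ν/(√(N^ν_j)·(n−1)!))·Σ_{σ ∈ S(n−1)} ψ^ν(σ⁻¹)_{jj}·[a=σ(q)]·φ̂((a,n−1)σ(q,n−1))_{kr}`. -/
noncomputable def zval {n w : ℕ} {I : Type} {mdim : I → ℕ}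
    (ψ : (ν : I) → Equiv.Perm (Fin (n - 1)) → Matrix (Fin (mdim ν)) (Fin (mdim ν)) ℂ)
    (φhat : Equiv.Perm (Fin (n - 1)) → Matrix (Fin w) (Fin w) ℂ)
    (q pLast : Fin (n - 1)) (r : Fin w)
    (a : Fin (n - 1)) (ν : I) (k : Fin w) (j : Fin (mdim ν)) : ℂ :=
  ((mdim ν : ℂ) /
      ((Real.sqrt ((Nval ψ φhat q pLast r ν j).re) : ℂ) * (Nat.factorial (n - 1) : ℂ))) *
    ∑ σ : Equiv.Perm (Fin (n - 1)),
      (ψ ν σ⁻¹) j j * (if a = σ q then 1 else 0) *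
        (φhat (Equiv.swap a pLast * σ * Equiv.swap q pLast)) k r

lemma conjT_eq {d : Type*} [Fintype d] [DecidableEq d]
    (A B : Matrix d d ℂ) (h1 : A * B = 1) (h2 : A * Aᴴ = 1) : Aᴴ = B := by
  have h2' : Aᴴ * A = 1 := mul_eq_one_comm.mp h2
  calc Aᴴ = Aᴴ * (A * B) := by rw [h1, mul_one]
    _ = (Aᴴ * A) * B := by rw [← mul_assoc]
    _ = B := by rw [h2', one_mul]

section schur
variable {G : Type} [Group G] [Fintype G] [DecidableEq G]
  {I : Type} {mdim : I → ℕ}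
  (ψ : (ν : I) → G → Matrix (Fin (mdim ν)) (Fin (mdim ν)) ℂ)
  (hψone : ∀ ν, ψ ν 1 = 1)
  (hψmul : ∀ ν σ τ, ψ ν (σ * τ) = ψ ν σ * ψ ν τ)
  (hψunit : ∀ ν σ, ψ ν σ * (ψ ν σ)ᴴ = 1)

include hψone hψmul in
lemma psi_inv (ν : I) (σ : G) (h2 : ψ ν σ * (ψ ν σ)ᴴ = 1) : (ψ ν σ)ᴴ = ψ ν σ⁻¹ := by
  refine conjT_eq _ _ ?_ h2
  rw [← hψmul, mul_inv_cancel, hψone]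

include hψmul in
lemma intertwine (μ ν : I) (E : Matrix (Fin (mdim ν)) (Fin (mdim μ)) ℂ) (τ : G) :
    (∑ σ : G, ψ ν σ * E * ψ μ σ⁻¹) * ψ μ τ
      = ψ ν τ * ∑ σ : G, ψ ν σ * E * ψ μ σ⁻¹ := by
  rw [Matrix.sum_mul, Matrix.mul_sum]
  refine Fintype.sum_equiv (Equiv.mulLeft τ⁻¹) _ _ fun σ => ?_
  have h1 : ψ ν τ * ψ ν (τ⁻¹ * σ) = ψ ν σ := by rw [← hψmul]; group
  have h2 : ψ μ σ⁻¹ * ψ μ τ = ψ μ ((τ⁻¹ * σ)⁻¹) := by rw [← hψmul]; group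
  simp only [Equiv.coe_mulLeft]
  calc ψ ν σ * E * ψ μ σ⁻¹ * ψ μ τ = ψ ν σ * E * (ψ μ σ⁻¹ * ψ μ τ) := by
        simp only [Matrix.mul_assoc]
    _ = ψ ν τ * (ψ ν (τ⁻¹*σ) * E * ψ μ ((τ⁻¹*σ)⁻¹)) := by
        rw [h2, ← h1]; simp only [Matrix.mul_assoc]
end schur

lemma mulE {m₁ m₂ : Type} [Fintype m₁] [DecidableEq m₁] [Fintype m₂] [DecidableEq m₂]
    (A : Matrix m₁ m₁ ℂ) (B : Matrix m₂ m₂ ℂ) (j l : m₁) (j' j'' : m₂) :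
    (A * (Matrix.of fun p q => (if p = j then 1 else 0) * (if q = j' then (1:ℂ) else 0)) * B)
      l j'' = A l j * B j' j'' := by
  simp [Matrix.mul_apply, ite_mul, mul_ite, Finset.mul_sum, Finset.sum_ite_eq,
    Finset.sum_ite_eq', mul_assoc]

section schur2
variable {G : Type} [Group G] [Fintype G] [DecidableEq G]
  {I : Type} {mdim : I → ℕ}
  (ψ : (ν : I) → G → Matrix (Fin (mdim ν)) (Fin (mdim ν)) ℂ)
  (hψone : ∀ ν, ψ ν 1 = 1)
  (hψmul : ∀ ν σ τ, ψ ν (σ * τ) = ψ ν σ * ψ ν τ)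
  (hψunit : ∀ ν σ, ψ ν σ * (ψ ν σ)ᴴ = 1)

include hψone hψmul hψunit in
lemma conj_entry (ν : I) (σ : G) (i₁ i₂ : Fin (mdim ν)) :
    (starRingEnd ℂ) ((ψ ν σ) i₁ i₂) = (ψ ν σ⁻¹) i₂ i₁ := by
  rw [← psi_inv ψ hψone hψmul ν σ (hψunit ν σ)]
  rw [Matrix.conjTranspose_apply, starRingEnd_apply]

include hψone hψmul hψunit in
lemma schur_ne
    (hψineq : ∀ μ ν, μ ≠ ν → ∀ T : Matrix (Fin (mdim ν)) (Fin (mdim μ)) ℂ,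
      (∀ σ, T * ψ μ σ = ψ ν σ * T) → T = 0)
    (μ ν : I) (hμν : μ ≠ ν) (j' : Fin (mdim μ)) (l j : Fin (mdim ν)) :
    ∑ σ : G, (starRingEnd ℂ) ((ψ μ σ) j' j') * (ψ ν σ) l j = 0 := by
  set E : Matrix (Fin (mdim ν)) (Fin (mdim μ)) ℂ :=
    Matrix.of fun p q => (if p = j then 1 else 0) * (if q = j' then (1:ℂ) else 0) with hE
  have hT := hψineq μ ν hμν (∑ σ : G, ψ ν σ * E * ψ μ σ⁻¹)
    (intertwine ψ hψmul μ ν E)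
  calc ∑ σ : G, (starRingEnd ℂ) ((ψ μ σ) j' j') * (ψ ν σ) l j
      = ∑ σ : G, (ψ ν σ * E * ψ μ σ⁻¹) l j' := by
        refine Finset.sum_congr rfl fun σ _ => ?_
        rw [hE, mulE, conj_entry ψ hψone hψmul hψunit μ σ j' j', mul_comm]
    _ = (∑ σ : G, ψ ν σ * E * ψ μ σ⁻¹) l j' := by
        rw [Matrix.sum_apply]
    _ = 0 := by rw [hT]; rfl

include hψone hψmul hψunit in
lemma schur_eq
    (hψirr : ∀ ν (T : Matrix (Fin (mdim ν)) (Fin (mdim ν)) ℂ),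
      (∀ σ, T * ψ ν σ = ψ ν σ * T) →
        ∃ c : ℂ, T = c • (1 : Matrix (Fin (mdim ν)) (Fin (mdim ν)) ℂ))
    (ν : I) (j' l j : Fin (mdim ν)) :
    ∑ σ : G, (starRingEnd ℂ) ((ψ ν σ) j' j') * (ψ ν σ) l j
      = (Fintype.card G : ℂ) / (mdim ν : ℂ) *
          ((if j = j' then 1 else 0) * (if l = j' then 1 else 0)) := by
  set E : Matrix (Fin (mdim ν)) (Fin (mdim ν)) ℂ :=
    Matrix.of fun p q => (if p = j then 1 else 0) * (if q = j' then (1:ℂ) else 0) with hE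
  obtain ⟨c, hc⟩ := hψirr ν (∑ σ : G, ψ ν σ * E * ψ ν σ⁻¹)
    (intertwine ψ hψmul ν ν E)
  have hm : (mdim ν : ℂ) ≠ 0 := by
    have : 0 < mdim ν := j.pos
    exact_mod_cast this.ne'
  have htrE : Matrix.trace E = (if j = j' then (1:ℂ) else 0) := by
    by_cases h : j = j' <;>
      simp [Matrix.trace, Matrix.diag, hE, ite_mul, Finset.sum_ite_eq, h, eq_comm]
  have htr : Matrix.trace (∑ σ : G, ψ ν σ * E * ψ ν σ⁻¹)
      = (Fintype.card G : ℂ) * (if j = j' then 1 else 0) := by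
    rw [Matrix.trace_sum]
    rw [Finset.sum_congr rfl (fun σ _ => ?_), Finset.sum_const, Finset.card_univ,
      nsmul_eq_mul]
    rw [Matrix.trace_mul_cycle, ← hψmul, inv_mul_cancel, hψone, one_mul, htrE]
  have hcm : c * (mdim ν : ℂ) = (Fintype.card G : ℂ) * (if j = j' then 1 else 0) := by
    rw [← htr, hc, Matrix.trace_smul, Matrix.trace_one, smul_eq_mul]
    simp [Fintype.card_fin, mul_comm]
  have hcval : c = (Fintype.card G : ℂ) / (mdim ν : ℂ) * (if j = j' then 1 else 0) := by
    field_simp at hcm ⊢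
    linear_combination hcm
  calc ∑ σ : G, (starRingEnd ℂ) ((ψ ν σ) j' j') * (ψ ν σ) l j
      = ∑ σ : G, (ψ ν σ * E * ψ ν σ⁻¹) l j' := by
        refine Finset.sum_congr rfl fun σ _ => ?_
        rw [hE, mulE, conj_entry ψ hψone hψmul hψunit ν σ j' j', mul_comm]
    _ = (∑ σ : G, ψ ν σ * E * ψ ν σ⁻¹) l j' := by
        rw [Matrix.sum_apply]
    _ = c * (if l = j' then 1 else 0) := by
        rw [hc]
        simp [Matrix.one_apply]
    _ = _ := by rw [hcval]; ring
end schur2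

section helpers4
variable {α β γ δ : Type} [Fintype α] [Fintype β] [Fintype γ] [Fintype δ]

lemma sum_swap4 {M : Type} [AddCommMonoid M] (f : α → β → γ → δ → M) :
    ∑ a : α, ∑ k : β, ∑ σ : γ, ∑ τ : δ, f a k σ τ
      = ∑ σ : γ, ∑ τ : δ, ∑ a : α, ∑ k : β, f a k σ τ := by
  calc ∑ a : α, ∑ k : β, ∑ σ : γ, ∑ τ : δ, f a k σ τ
      = ∑ a : α, ∑ σ : γ, ∑ k : β, ∑ τ : δ, f a k σ τ :=
        Finset.sum_congr rfl fun a _ => Finset.sum_comm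
    _ = ∑ σ : γ, ∑ a : α, ∑ k : β, ∑ τ : δ, f a k σ τ := Finset.sum_comm
    _ = ∑ σ : γ, ∑ a : α, ∑ τ : δ, ∑ k : β, f a k σ τ :=
        Finset.sum_congr rfl fun σ _ => Finset.sum_congr rfl fun a _ =>
          Finset.sum_comm
    _ = ∑ σ : γ, ∑ τ : δ, ∑ a : α, ∑ k : β, f a k σ τ :=
        Finset.sum_congr rfl fun σ _ => Finset.sum_comm

lemma pull4 (c : ℂ) (f : γ → α → β → ℂ) (g : δ → α → β → ℂ) :
    ∑ a : α, ∑ k : β, c * ((∑ σ : γ, f σ a k) * (∑ τ : δ, g τ a k))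
      = c * ∑ σ : γ, ∑ τ : δ, ∑ a : α, ∑ k : β, f σ a k * g τ a k := by
  have h1 : ∀ a k, c * ((∑ σ : γ, f σ a k) * (∑ τ : δ, g τ a k))
      = ∑ σ : γ, ∑ τ : δ, c * (f σ a k * g τ a k) := by
    intro a k
    rw [Finset.sum_mul_sum, Finset.mul_sum]
    exact Finset.sum_congr rfl fun σ _ => Finset.mul_sum _ _ _
  calc ∑ a : α, ∑ k : β, c * ((∑ σ : γ, f σ a k) * (∑ τ : δ, g τ a k))
      = ∑ a : α, ∑ k : β, ∑ σ : γ, ∑ τ : δ, c * (f σ a k * g τ a k) :=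
        Finset.sum_congr rfl fun a _ => Finset.sum_congr rfl fun k _ => h1 a k
    _ = ∑ σ : γ, ∑ τ : δ, ∑ a : α, ∑ k : β, c * (f σ a k * g τ a k) :=
        sum_swap4 (fun a k σ τ => c * (f σ a k * g τ a k))
    _ = c * ∑ σ : γ, ∑ τ : δ, ∑ a : α, ∑ k : β, f σ a k * g τ a k := by
        rw [Finset.mul_sum]
        refine Finset.sum_congr rfl fun σ _ => ?_
        rw [Finset.mul_sum]
        refine Finset.sum_congr rfl fun τ _ => ?_
        rw [Finset.mul_sum]
        refine Finset.sum_congr rfl fun a _ => ?_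
        rw [Finset.mul_sum]

lemma swap_factor {ι : Type} [Fintype ι]
    (A : γ → ℂ) (P : δ → ι → ℂ) (Q : γ → ι → ℂ) (C : δ → ℂ) :
    ∑ σ : γ, ∑ ρ : δ, A σ * ((∑ l : ι, P ρ l * Q σ l) * C ρ)
      = ∑ ρ : δ, C ρ * ∑ l : ι, P ρ l * ∑ σ : γ, A σ * Q σ l := by
  rw [Finset.sum_comm]
  refine Finset.sum_congr rfl fun ρ _ => ?_
  calc ∑ σ : γ, A σ * ((∑ l : ι, P ρ l * Q σ l) * C ρ)
      = ∑ σ : γ, ∑ l : ι, A σ * (P ρ l * Q σ l) * C ρ := by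
        refine Finset.sum_congr rfl fun σ _ => ?_
        rw [Finset.sum_mul, Finset.mul_sum]
        exact Finset.sum_congr rfl fun l _ => by ring
    _ = ∑ l : ι, ∑ σ : γ, A σ * (P ρ l * Q σ l) * C ρ := Finset.sum_comm
    _ = C ρ * ∑ l : ι, P ρ l * ∑ σ : γ, A σ * Q σ l := by
        rw [Finset.mul_sum]
        refine Finset.sum_congr rfl fun l _ => ?_
        calc ∑ σ : γ, A σ * (P ρ l * Q σ l) * C ρ
            = ∑ σ : γ, C ρ * (P ρ l * (A σ * Q σ l)) :=
              Finset.sum_congr rfl fun σ _ => by ring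
          _ = C ρ * (P ρ l * ∑ σ : γ, A σ * Q σ l) := by
              rw [Finset.mul_sum, Finset.mul_sum]

lemma conj_mul_sum (c : ℂ) (f : α → ℂ) :
    (starRingEnd ℂ) (c * ∑ i : α, f i)
      = (starRingEnd ℂ) c * ∑ i : α, (starRingEnd ℂ) (f i) := by
  rw [_root_.map_mul, map_sum]

lemma sum_conj_mul {w : ℕ} (Ψ1 Ψ2 : ℂ) (Mg Mh : Matrix (Fin w) (Fin w) ℂ) (r : Fin w) (c : ℂ)
    (h : ∑ k : Fin w, (starRingEnd ℂ) (Mg k r) * Mh k r = c) :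
    ∑ k : Fin w, (starRingEnd ℂ) (Ψ1 * Mg k r) * (Ψ2 * Mh k r)
      = (starRingEnd ℂ) Ψ1 * (Ψ2 * c) := by
  calc ∑ k : Fin w, (starRingEnd ℂ) (Ψ1 * Mg k r) * (Ψ2 * Mh k r)
      = ∑ k : Fin w, (starRingEnd ℂ) Ψ1 * (Ψ2 * ((starRingEnd ℂ) (Mg k r) * Mh k r)) :=
        Finset.sum_congr rfl fun k _ => by rw [_root_.map_mul]; ring
    _ = (starRingEnd ℂ) Ψ1 * (Ψ2 * ∑ k : Fin w, (starRingEnd ℂ) (Mg k r) * Mh k r) := by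
        rw [Finset.mul_sum, Finset.mul_sum]
    _ = _ := by rw [h]

lemma final_arith (m F N s : ℂ) (hm : m ≠ 0) (hF : F ≠ 0) (hs : s ≠ 0) (hss : s * s = N) :
    (m / (s * F)) * (m / (s * F)) * (F / m * (F / m * N)) = 1 := by
  field_simp
  rw [← hss]; ring
end helpers4

/-- The columns of the matrix `z`, indexed by pairs `(ν, j)`, are orthonormal. Here `G` is the
symmetric group on `{1,…,n−1}` (modelled as `Equiv.Perm (Fin (n−1))`), `H` is the stabilizer of
the last point `n−1` (modelled by the element `pLast` of index `n−2`), `(ψ^ν)` is a finite family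
of pairwise inequivalent irreducible unitary matrix representations of `G`, and `φ̂` extends a
unitary matrix representation `φ` of `H` by zero outside `H`. -/
theorem stmt14 (n w : ℕ) (hn : 3 ≤ n)
    {I : Type} [Fintype I] [DecidableEq I] (mdim : I → ℕ)
    (ψ : (ν : I) → Equiv.Perm (Fin (n - 1)) → Matrix (Fin (mdim ν)) (Fin (mdim ν)) ℂ)
    (hψone : ∀ ν, ψ ν 1 = 1)
    (hψmul : ∀ ν σ τ, ψ ν (σ * τ) = ψ ν σ * ψ ν τ)
    (hψunit : ∀ ν σ, ψ ν σ * (ψ ν σ)ᴴ = 1)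
    (hψirr : ∀ ν (T : Matrix (Fin (mdim ν)) (Fin (mdim ν)) ℂ),
      (∀ σ, T * ψ ν σ = ψ ν σ * T) →
        ∃ c : ℂ, T = c • (1 : Matrix (Fin (mdim ν)) (Fin (mdim ν)) ℂ))
    (hψineq : ∀ μ ν, μ ≠ ν → ∀ T : Matrix (Fin (mdim ν)) (Fin (mdim μ)) ℂ,
      (∀ σ, T * ψ μ σ = ψ ν σ * T) → T = 0)
    (pLast : Fin (n - 1)) (hpLast : (pLast : ℕ) = n - 2)
    (φhat : Equiv.Perm (Fin (n - 1)) → Matrix (Fin w) (Fin w) ℂ)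
    (hφone : φhat 1 = 1)
    (hφmul : ∀ σ τ, σ pLast = pLast → τ pLast = pLast →
      φhat (σ * τ) = φhat σ * φhat τ)
    (hφunit : ∀ σ, σ pLast = pLast → φhat σ * (φhat σ)ᴴ = 1)
    (hφzero : ∀ σ, σ pLast ≠ pLast → φhat σ = 0)
    (q : Fin (n - 1)) (r : Fin w)
    (hN : ∀ ν j, 0 < (Nval ψ φhat q pLast r ν j).re ∧
      (Nval ψ φhat q pLast r ν j).im = 0)
    (μ ν : I) (j' : Fin (mdim μ)) (j : Fin (mdim ν)) :
    (∑ a : Fin (n - 1), ∑ k : Fin w,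
        (starRingEnd ℂ) (zval ψ φhat q pLast r a μ k j') *
          zval ψ φhat q pLast r a ν k j) =
      if (⟨μ, j'⟩ : Σ i : I, Fin (mdim i)) = ⟨ν, j⟩ then 1 else 0 := by
  classical
  have hF : (Nat.factorial (n - 1) : ℂ) ≠ 0 := Nat.cast_ne_zero.mpr (Nat.factorial_ne_zero _)
  have hfixinv : ∀ g : Equiv.Perm (Fin (n - 1)), g pLast = pLast → g⁻¹ pLast = pLast :=
    fun g hg => Equiv.Perm.inv_eq_iff_eq.mpr hg.symm
  have hφinv : ∀ g : Equiv.Perm (Fin (n - 1)), g pLast = pLast → (φhat g)ᴴ = φhat g⁻¹ := by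
    intro g hg
    refine conjT_eq _ _ ?_ (hφunit g hg)
    rw [← hφmul g g⁻¹ hg (hfixinv g hg), mul_inv_cancel, hφone]
  have hphi_entry : ∀ g h : Equiv.Perm (Fin (n - 1)), g pLast = pLast → h pLast = pLast →
      ∑ k : Fin w, (starRingEnd ℂ) ((φhat g) k r) * (φhat h) k r = (φhat (g⁻¹ * h)) r r := by
    intro g h hg hh
    rw [hφmul g⁻¹ h (hfixinv g hg) hh, ← hφinv g hg, Matrix.mul_apply]
    refine Finset.sum_congr rfl fun k _ => ?_
    rw [Matrix.conjTranspose_apply, starRingEnd_apply]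
  have hgfix : ∀ σ : Equiv.Perm (Fin (n - 1)),
      (Equiv.swap (σ q) pLast * σ * Equiv.swap q pLast) pLast = pLast := by
    intro σ
    simp [Equiv.Perm.mul_apply, Equiv.swap_apply_right, Equiv.swap_apply_left]
  have key : ∀ σ τ : Equiv.Perm (Fin (n - 1)),
      (∑ a : Fin (n - 1), ∑ k : Fin w, (starRingEnd ℂ) ((ψ μ σ⁻¹) j' j' * (if a = σ q then 1 else 0) * (φhat (Equiv.swap a pLast * σ * Equiv.swap q pLast)) k r) * ((ψ ν τ⁻¹) j j * (if a = τ q then 1 else 0) * (φhat (Equiv.swap a pLast * τ * Equiv.swap q pLast)) k r)) = ((starRingEnd ℂ) ((ψ μ σ⁻¹) j' j') * ((ψ ν τ⁻¹) j j * ((if σ q = τ q then (1:ℂ) else 0) * (φhat (Equiv.swap q pLast * (σ⁻¹ * τ) * Equiv.swap q pLast)) r r))) := by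
    intro σ τ
    rw [Finset.sum_eq_single_of_mem (σ q) (Finset.mem_univ _)
      (fun b _ hb => Finset.sum_eq_zero fun k _ => by simp [hb])]
    by_cases hqq : σ q = τ q
    · have hg := hgfix σ
      have hh : (Equiv.swap (σ q) pLast * τ * Equiv.swap q pLast) pLast = pLast := by
        rw [hqq]; exact hgfix τ
      have harg : (Equiv.swap (σ q) pLast * σ * Equiv.swap q pLast)⁻¹ *
          (Equiv.swap (σ q) pLast * τ * Equiv.swap q pLast)
          = Equiv.swap q pLast * (σ⁻¹ * τ) * Equiv.swap q pLast := by
        simp [_root_.mul_inv_rev, Equiv.swap_inv, mul_assoc, Equiv.swap_mul_self_mul]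
      have hsum : ∑ k : Fin w, (starRingEnd ℂ)
            ((φhat (Equiv.swap (σ q) pLast * σ * Equiv.swap q pLast)) k r) *
            (φhat (Equiv.swap (σ q) pLast * τ * Equiv.swap q pLast)) k r
          = (φhat (Equiv.swap q pLast * (σ⁻¹ * τ) * Equiv.swap q pLast)) r r := by
        rw [hphi_entry _ _ hg hh, harg]
      simp only [if_pos hqq, eq_self_iff_true, if_true, mul_one, one_mul]
      exact sum_conj_mul _ _ _ _ _ _ hsum
    · rw [if_neg hqq]
      simp only [mul_zero, zero_mul, map_zero, Finset.sum_const_zero]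
  have hchg : ∀ σ : Equiv.Perm (Fin (n - 1)), (∑ τ : Equiv.Perm (Fin (n - 1)), ((starRingEnd ℂ) ((ψ μ σ⁻¹) j' j') * ((ψ ν τ⁻¹) j j * ((if σ q = τ q then (1:ℂ) else 0) * (φhat (Equiv.swap q pLast * (σ⁻¹ * τ) * Equiv.swap q pLast)) r r)))) = ∑ ρ : Equiv.Perm (Fin (n - 1)), ((starRingEnd ℂ) ((ψ μ σ⁻¹) j' j') * ((∑ l, (ψ ν ρ⁻¹) j l * (ψ ν σ⁻¹) l j) * ((if ρ q = q then (1:ℂ) else 0) * (φhat (Equiv.swap q pLast * ρ * Equiv.swap q pLast)) r r))) := by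
    intro σ
    refine (Fintype.sum_equiv (Equiv.mulLeft σ) _ _ fun ρ => ?_).symm
    simp only [Equiv.coe_mulLeft]
    have h1 : (ψ ν (σ * ρ)⁻¹) j j = ∑ l, (ψ ν ρ⁻¹) j l * (ψ ν σ⁻¹) l j := by
      rw [_root_.mul_inv_rev, hψmul, Matrix.mul_apply]
    have h2 : (if σ q = (σ * ρ) q then (1:ℂ) else 0) = (if ρ q = q then (1:ℂ) else 0) := by
      by_cases hρ : ρ q = q
      · simp [Equiv.Perm.mul_apply, hρ]
      · have hne : σ q ≠ (σ * ρ) q := by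
          simp only [Equiv.Perm.mul_apply]
          exact fun h => hρ (σ.injective h).symm
        rw [if_neg hne, if_neg hρ]
    have h3 : σ⁻¹ * (σ * ρ) = ρ := inv_mul_cancel_left σ ρ
    rw [h1, h3, ← h2]
    rfl
  have hmain : (∑ a : Fin (n - 1), ∑ k : Fin w,
        (starRingEnd ℂ) (zval ψ φhat q pLast r a μ k j') * zval ψ φhat q pLast r a ν k j)
      = (starRingEnd ℂ) ((mdim μ : ℂ) / ((Real.sqrt ((Nval ψ φhat q pLast r μ j').re) : ℂ) * (Nat.factorial (n - 1) : ℂ))) * ((mdim ν : ℂ) / ((Real.sqrt ((Nval ψ φhat q pLast r ν j).re) : ℂ) * (Nat.factorial (n - 1) : ℂ))) * ∑ ρ : Equiv.Perm (Fin (n - 1)), (((if ρ q = q then (1:ℂ) else 0) * (φhat (Equiv.swap q pLast * ρ * Equiv.swap q pLast)) r r) * ∑ l, (ψ ν ρ⁻¹) j l * ∑ σ : Equiv.Perm (Fin (n - 1)), (starRingEnd ℂ) ((ψ μ σ) j' j') * (ψ ν σ) l j) := by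
    calc (∑ a : Fin (n - 1), ∑ k : Fin w,
        (starRingEnd ℂ) (zval ψ φhat q pLast r a μ k j') * zval ψ φhat q pLast r a ν k j)
        = ∑ a : Fin (n - 1), ∑ k : Fin w, ((starRingEnd ℂ) ((mdim μ : ℂ) / ((Real.sqrt ((Nval ψ φhat q pLast r μ j').re) : ℂ) * (Nat.factorial (n - 1) : ℂ))) * ((mdim ν : ℂ) / ((Real.sqrt ((Nval ψ φhat q pLast r ν j).re) : ℂ) * (Nat.factorial (n - 1) : ℂ)))) *
            ((∑ σ : Equiv.Perm (Fin (n - 1)), (starRingEnd ℂ) ((ψ μ σ⁻¹) j' j' * (if a = σ q then 1 else 0) * (φhat (Equiv.swap a pLast * σ * Equiv.swap q pLast)) k r)) * (∑ τ : Equiv.Perm (Fin (n - 1)), ((ψ ν τ⁻¹) j j * (if a = τ q then 1 else 0) * (φhat (Equiv.swap a pLast * τ * Equiv.swap q pLast)) k r))) := by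
          refine Finset.sum_congr rfl fun a _ => Finset.sum_congr rfl fun k _ => ?_
          simp only [zval]
          rw [conj_mul_sum]
          ring
      _ = (starRingEnd ℂ) ((mdim μ : ℂ) / ((Real.sqrt ((Nval ψ φhat q pLast r μ j').re) : ℂ) * (Nat.factorial (n - 1) : ℂ))) * ((mdim ν : ℂ) / ((Real.sqrt ((Nval ψ φhat q pLast r ν j).re) : ℂ) * (Nat.factorial (n - 1) : ℂ))) * ∑ σ : Equiv.Perm (Fin (n - 1)), ∑ τ : Equiv.Perm (Fin (n - 1)), ∑ a : Fin (n - 1), ∑ k : Fin w,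
            (starRingEnd ℂ) ((ψ μ σ⁻¹) j' j' * (if a = σ q then 1 else 0) * (φhat (Equiv.swap a pLast * σ * Equiv.swap q pLast)) k r) * ((ψ ν τ⁻¹) j j * (if a = τ q then 1 else 0) * (φhat (Equiv.swap a pLast * τ * Equiv.swap q pLast)) k r) := pull4 _ _ _
      _ = (starRingEnd ℂ) ((mdim μ : ℂ) / ((Real.sqrt ((Nval ψ φhat q pLast r μ j').re) : ℂ) * (Nat.factorial (n - 1) : ℂ))) * ((mdim ν : ℂ) / ((Real.sqrt ((Nval ψ φhat q pLast r ν j).re) : ℂ) * (Nat.factorial (n - 1) : ℂ))) * ∑ σ : Equiv.Perm (Fin (n - 1)), ∑ τ : Equiv.Perm (Fin (n - 1)), ((starRingEnd ℂ) ((ψ μ σ⁻¹) j' j') * ((ψ ν τ⁻¹) j j * ((if σ q = τ q then (1:ℂ) else 0) * (φhat (Equiv.swap q pLast * (σ⁻¹ * τ) * Equiv.swap q pLast)) r r))) := by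
          congr 1
          exact Finset.sum_congr rfl fun σ _ => Finset.sum_congr rfl fun τ _ => key σ τ
      _ = (starRingEnd ℂ) ((mdim μ : ℂ) / ((Real.sqrt ((Nval ψ φhat q pLast r μ j').re) : ℂ) * (Nat.factorial (n - 1) : ℂ))) * ((mdim ν : ℂ) / ((Real.sqrt ((Nval ψ φhat q pLast r ν j).re) : ℂ) * (Nat.factorial (n - 1) : ℂ))) * ∑ σ : Equiv.Perm (Fin (n - 1)), ∑ ρ : Equiv.Perm (Fin (n - 1)), ((starRingEnd ℂ) ((ψ μ σ⁻¹) j' j') * ((∑ l, (ψ ν ρ⁻¹) j l * (ψ ν σ⁻¹) l j) * ((if ρ q = q then (1:ℂ) else 0) * (φhat (Equiv.swap q pLast * ρ * Equiv.swap q pLast)) r r))) := by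
          congr 1
          exact Finset.sum_congr rfl fun σ _ => hchg σ
      _ = (starRingEnd ℂ) ((mdim μ : ℂ) / ((Real.sqrt ((Nval ψ φhat q pLast r μ j').re) : ℂ) * (Nat.factorial (n - 1) : ℂ))) * ((mdim ν : ℂ) / ((Real.sqrt ((Nval ψ φhat q pLast r ν j).re) : ℂ) * (Nat.factorial (n - 1) : ℂ))) * ∑ ρ : Equiv.Perm (Fin (n - 1)), (((if ρ q = q then (1:ℂ) else 0) * (φhat (Equiv.swap q pLast * ρ * Equiv.swap q pLast)) r r) * ∑ l, (ψ ν ρ⁻¹) j l * ∑ σ : Equiv.Perm (Fin (n - 1)), (starRingEnd ℂ) ((ψ μ σ⁻¹) j' j') * (ψ ν σ⁻¹) l j) := by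
          congr 1
          exact swap_factor _ _ _ _
      _ = (starRingEnd ℂ) ((mdim μ : ℂ) / ((Real.sqrt ((Nval ψ φhat q pLast r μ j').re) : ℂ) * (Nat.factorial (n - 1) : ℂ))) * ((mdim ν : ℂ) / ((Real.sqrt ((Nval ψ φhat q pLast r ν j).re) : ℂ) * (Nat.factorial (n - 1) : ℂ))) * ∑ ρ : Equiv.Perm (Fin (n - 1)), (((if ρ q = q then (1:ℂ) else 0) * (φhat (Equiv.swap q pLast * ρ * Equiv.swap q pLast)) r r) * ∑ l, (ψ ν ρ⁻¹) j l * ∑ σ : Equiv.Perm (Fin (n - 1)), (starRingEnd ℂ) ((ψ μ σ) j' j') * (ψ ν σ) l j) := by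
          congr 1
          refine Finset.sum_congr rfl fun ρ _ => ?_
          congr 1
          refine Finset.sum_congr rfl fun l _ => ?_
          congr 1
          exact Fintype.sum_equiv (Equiv.inv _) _ _ fun σ => rfl
  by_cases hμν : μ = ν
  · subst hμν
    by_cases hjj : j' = j
    · subst hjj
      rw [hmain]
      have hm : (mdim μ : ℂ) ≠ 0 := by
        have : 0 < mdim μ := j'.pos
        exact_mod_cast this.ne'
      have hWl : ∀ l, (∑ σ : Equiv.Perm (Fin (n - 1)), (starRingEnd ℂ) ((ψ μ σ) j' j') * (ψ μ σ) l j')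
          = ((Nat.factorial (n - 1) : ℂ) / (mdim μ : ℂ)) * (if l = j' then 1 else 0) := by
        intro l
        rw [schur_eq ψ hψone hψmul hψunit hψirr μ j' l j']
        simp [Fintype.card_perm, Fintype.card_fin]
      have h5 : ∀ ρ : Equiv.Perm (Fin (n - 1)), (∑ l, (ψ μ ρ⁻¹) j' l * (((Nat.factorial (n - 1) : ℂ) / (mdim μ : ℂ)) * (if l = j' then 1 else 0)))
          = ((Nat.factorial (n - 1) : ℂ) / (mdim μ : ℂ)) * (ψ μ ρ⁻¹) j' j' := by
        intro ρ
        rw [Finset.sum_eq_single_of_mem j' (Finset.mem_univ _) (fun b _ hb => by simp [hb])]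
        rw [if_pos rfl]
        ring
      have hstep0 : (∑ ρ : Equiv.Perm (Fin (n - 1)), (((if ρ q = q then (1:ℂ) else 0) * (φhat (Equiv.swap q pLast * ρ * Equiv.swap q pLast)) r r) * ∑ l, (ψ μ ρ⁻¹) j' l * ∑ σ : Equiv.Perm (Fin (n - 1)), (starRingEnd ℂ) ((ψ μ σ) j' j') * (ψ μ σ) l j'))
          = ∑ ρ : Equiv.Perm (Fin (n - 1)), (((if ρ q = q then (1:ℂ) else 0) * (φhat (Equiv.swap q pLast * ρ * Equiv.swap q pLast)) r r) * (((Nat.factorial (n - 1) : ℂ) / (mdim μ : ℂ)) * (ψ μ ρ⁻¹) j' j')) := by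
        refine Finset.sum_congr rfl fun ρ _ => ?_
        simp only [hWl]
        rw [h5 ρ]
      have h9 : Nval ψ φhat q pLast r μ j' = ((mdim μ : ℂ) / (Nat.factorial (n - 1) : ℂ)) *
          ∑ σ : Equiv.Perm (Fin (n - 1)), (ψ μ σ⁻¹) j' j' * (if σ q = q then 1 else 0) *
            (φhat (Equiv.swap q pLast * σ * Equiv.swap q pLast)) r r := rfl
      have hstep : (∑ ρ : Equiv.Perm (Fin (n - 1)), (((if ρ q = q then (1:ℂ) else 0) * (φhat (Equiv.swap q pLast * ρ * Equiv.swap q pLast)) r r) * (((Nat.factorial (n - 1) : ℂ) / (mdim μ : ℂ)) * (ψ μ ρ⁻¹) j' j')))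
          = ((Nat.factorial (n - 1) : ℂ) / (mdim μ : ℂ)) * (((Nat.factorial (n - 1) : ℂ) / (mdim μ : ℂ)) * Nval ψ φhat q pLast r μ j') := by
        rw [h9, Finset.mul_sum, Finset.mul_sum, Finset.mul_sum]
        refine Finset.sum_congr rfl fun ρ _ => ?_
        field_simp
      rw [hstep0, hstep]
      set x : ℝ := (Nval ψ φhat q pLast r μ j').re with hx
      have hxpos : 0 < x := by rw [hx]; exact (hN μ j').1
      have hNx : Nval ψ φhat q pLast r μ j' = ((x : ℝ) : ℂ) := by
        apply Complex.ext
        · simp [hx]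
        · simp [(hN μ j').2]
      have hs : ((Real.sqrt x : ℝ) : ℂ) ≠ 0 := by
        simp only [ne_eq, Complex.ofReal_eq_zero]
        exact Real.sqrt_ne_zero'.mpr hxpos
      have hss : ((Real.sqrt x : ℝ) : ℂ) * ((Real.sqrt x : ℝ) : ℂ) = ((x : ℝ) : ℂ) := by
        rw [← Complex.ofReal_mul, Real.mul_self_sqrt hxpos.le]
      have hconj : (starRingEnd ℂ) ((mdim μ : ℂ) / (((Real.sqrt x : ℝ) : ℂ) * (Nat.factorial (n - 1) : ℂ)))
          = (mdim μ : ℂ) / (((Real.sqrt x : ℝ) : ℂ) * (Nat.factorial (n - 1) : ℂ)) := by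
        simp [map_div₀, _root_.map_mul, Complex.conj_ofReal]
      rw [hNx, hconj, final_arith _ (Nat.factorial (n - 1) : ℂ) _ _ hm hF hs hss]
      simp
    · have hW0 : ∀ l, (∑ σ : Equiv.Perm (Fin (n - 1)), (starRingEnd ℂ) ((ψ μ σ) j' j') * (ψ μ σ) l j) = 0 := by
        intro l
        rw [schur_eq ψ hψone hψmul hψunit hψirr μ j' l j]
        have : j ≠ j' := fun h => hjj h.symm
        simp [this]
      rw [hmain]
      simp [hW0, Sigma.mk.inj_iff, hjj]
  · have hW0 : ∀ l, (∑ σ : Equiv.Perm (Fin (n - 1)), (starRingEnd ℂ) ((ψ μ σ) j' j') * (ψ ν σ) l j) = 0 :=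
      fun l => schur_ne ψ hψone hψmul hψunit hψineq μ ν hμν j' l j
    rw [hmain]
    simp [hW0, Sigma.mk.inj_iff, hμν]
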